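/- In S̄ = S/(m_{(a,b)} : a ≠ b), for every k > 0: m̄_{(k,k)} = (−1)^k · m̄_{(k,0)(0,1)^k}. -/

import Mathlib

/-- The monomial MacMahon symmetric function `m_Λ` attached to a bipartite partition
`Λ` (a multiset of vectors in `ℕ×ℕ`), as a formal power series in two families of
variables `xᵢ = X (i,0)`, `yᵢ = X (i,1)`: the sum, with coefficients `0` or `1`, of all
monomials whose multiset of exponent pairs equals `Λ`. -/
noncomputable def mm (Λ : Multiset (ℕ × ℕ)) : MvPowerSeries (ℕ × Fin 2) ℂ :=
  fun d => if (d.support.image Prod.fst).val.map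
      (fun i => (d (i, 0), d (i, 1))) = Λ then 1 else 0

/-- The ideal of `S` generated by the `m_{(a,b)}` with `a ≠ b`, as a `ℂ`-submodule:
the span of the products `m_{(a,b)} · m_Λ`. -/
noncomputable def Jbar : Submodule ℂ (MvPowerSeries (ℕ × Fin 2) ℂ) :=
  Submodule.span ℂ {x | ∃ (a b : ℕ) (Λ : Multiset (ℕ × ℕ)),
    a ≠ b ∧ (0, 0) ∉ Λ ∧ x = mm {(a, b)} * mm Λ}

/-! ### Auxiliary machinery -/

/-- The "shape" of an exponent vector: the multiset of exponent pairs. -/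
def shape (d : (ℕ × Fin 2) →₀ ℕ) : Multiset (ℕ × ℕ) :=
  (d.support.image Prod.fst).val.map (fun i => (d (i, 0), d (i, 1)))

lemma coeff_mm (Λ : Multiset (ℕ × ℕ)) (d : (ℕ × Fin 2) →₀ ℕ) :
    MvPowerSeries.coeff d (mm Λ) = if shape d = Λ then 1 else 0 := rfl

/-- The exponent vector of the monomial `xᵢ₀ᵏ yᵢ₀ʲ`. -/
noncomputable def fs (i0 k j : ℕ) : (ℕ × Fin 2) →₀ ℕ :=
  Finsupp.single (i0, 0) k + Finsupp.single (i0, 1) j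

/-- The exponent vector of the monomial `∏_{i ∈ T} yᵢ`. -/
noncomputable def ds (T : Finset ℕ) : (ℕ × Fin 2) →₀ ℕ :=
  T.sum (fun i => Finsupp.single (i, (1 : Fin 2)) 1)

lemma fs_apply0 (i0 k j i : ℕ) : fs i0 k j (i, 0) = if i = i0 then k else 0 := by
  simp [fs, Finsupp.single_apply, Prod.ext_iff, eq_comm]

lemma fs_apply1 (i0 k j i : ℕ) : fs i0 k j (i, 1) = if i = i0 then j else 0 := by
  simp [fs, Finsupp.single_apply, Prod.ext_iff, eq_comm]

lemma ds_apply0 (T : Finset ℕ) (i : ℕ) : ds T (i, 0) = 0 := by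
  simp [ds, Finsupp.finset_sum_apply, Finsupp.single_apply, Prod.ext_iff]

lemma ds_apply1 (T : Finset ℕ) (i : ℕ) : ds T (i, 1) = if i ∈ T then 1 else 0 := by
  simp [ds, Finsupp.finset_sum_apply, Finsupp.single_apply, Prod.ext_iff, eq_comm]

lemma ds_inj {T T' : Finset ℕ} (h : ds T = ds T') : T = T' := by
  ext i
  have := congrArg (fun f : (ℕ × Fin 2) →₀ ℕ => f (i, 1)) h
  simp only [ds_apply1] at this
  by_cases hT : i ∈ T <;> by_cases hT' : i ∈ T' <;> simp_all

lemma shape_spec (d : (ℕ × Fin 2) →₀ ℕ) (F : Finset ℕ)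
    (h : ∀ i, i ∈ F ↔ (d (i, 0) ≠ 0 ∨ d (i, 1) ≠ 0)) :
    shape d = F.val.map (fun i => (d (i, 0), d (i, 1))) := by
  have hF : d.support.image Prod.fst = F := by
    ext i
    rw [h i, Finset.mem_image]
    constructor
    · rintro ⟨⟨a, c⟩, hmem, rfl⟩
      rw [Finsupp.mem_support_iff] at hmem
      have : c = 0 ∨ c = 1 := by omega
      rcases this with rfl | rfl
      · exact Or.inl hmem
      · exact Or.inr hmem
    · rintro (h0 | h1)
      · exact ⟨(i, 0), Finsupp.mem_support_iff.mpr h0, rfl⟩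
      · exact ⟨(i, 1), Finsupp.mem_support_iff.mpr h1, rfl⟩
  rw [shape, hF]

lemma shape_D (i0 k j : ℕ) (T : Finset ℕ) (hk : 0 < k) (hT : i0 ∉ T) :
    shape (fs i0 k j + ds T)
      = (k, j) ::ₘ Multiset.replicate T.card ((0 : ℕ), (1 : ℕ)) := by
  set d := fs i0 k j + ds T with hd
  have hap0 : ∀ i, d (i, 0) = if i = i0 then k else 0 := by
    intro i
    simp [hd, Finsupp.add_apply, fs_apply0, ds_apply0]
  have hap1 : ∀ i, d (i, 1) = (if i = i0 then j else 0) + (if i ∈ T then 1 else 0) := by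
    intro i
    simp [hd, Finsupp.add_apply, fs_apply1, ds_apply1]
  have hF : ∀ i, i ∈ insert i0 T ↔ (d (i, 0) ≠ 0 ∨ d (i, 1) ≠ 0) := by
    intro i
    rw [hap0 i, hap1 i, Finset.mem_insert]
    by_cases h1 : i = i0 <;> by_cases h2 : i ∈ T <;> simp_all <;> omega
  rw [shape_spec d _ hF, Finset.insert_val_of_notMem hT, Multiset.map_cons]
  congr 1
  · rw [hap0 i0, hap1 i0, if_pos rfl, if_pos rfl, if_neg hT]
    simp
  · rw [show T.card = Multiset.card (T.val.map (fun i => (d (i, 0), d (i, 1)))) by simp]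
    rw [Multiset.eq_replicate_card]
    intro x hx
    rw [Multiset.mem_map] at hx
    obtain ⟨i, hi, rfl⟩ := hx
    have hne : i ≠ i0 := fun h => hT (h ▸ hi)
    have hiT : i ∈ T := hi
    rw [hap0 i, hap1 i, if_neg hne, if_neg hne, if_pos hiT]

lemma shape_eq_iff (k j r : ℕ) (hk : 0 < k) (d : (ℕ × Fin 2) →₀ ℕ) :
    shape d = (k, j) ::ₘ Multiset.replicate r ((0 : ℕ), (1 : ℕ)) ↔
      ∃ (i0 : ℕ) (T : Finset ℕ), i0 ∉ T ∧ T.card = r ∧ d = fs i0 k j + ds T := by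
  constructor
  · intro h
    set F := d.support.image Prod.fst with hFdef
    have hmem : (k, j) ∈ F.val.map (fun i => (d (i, 0), d (i, 1))) := by
      rw [show F.val.map (fun i => (d (i, 0), d (i, 1))) = shape d from rfl, h]
      exact Multiset.mem_cons_self _ _
    rw [Multiset.mem_map] at hmem
    obtain ⟨i0, hi0F, hi0⟩ := hmem
    have hd0 : d (i0, 0) = k := by
      have := congrArg Prod.fst hi0; simpa using this
    have hd1 : d (i0, 1) = j := by
      have := congrArg Prod.snd hi0; simpa using this
    have hrep : (F.erase i0).val.map (fun i => (d (i, 0), d (i, 1)))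
        = Multiset.replicate r ((0 : ℕ), (1 : ℕ)) := by
      have hcons : F.val = i0 ::ₘ (F.erase i0).val := by
        rw [Finset.erase_val]
        exact (Multiset.cons_erase hi0F).symm
      have : shape d = (d (i0, 0), d (i0, 1)) ::ₘ
          (F.erase i0).val.map (fun i => (d (i, 0), d (i, 1))) := by
        rw [show shape d = F.val.map (fun i => (d (i, 0), d (i, 1))) from rfl, hcons,
          Multiset.map_cons]
      rw [this, hd0, hd1] at h
      exact (Multiset.cons_inj_right _).mp h
    have hT1 : ∀ i ∈ F.erase i0, d (i, 0) = 0 ∧ d (i, 1) = 1 := by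
      intro i hi
      have hx : (d (i, 0), d (i, 1)) ∈
          (F.erase i0).val.map (fun i => (d (i, 0), d (i, 1))) :=
        Multiset.mem_map_of_mem _ hi
      rw [hrep] at hx
      have := (Multiset.eq_of_mem_replicate hx)
      exact ⟨congrArg Prod.fst this, congrArg Prod.snd this⟩
    have hout : ∀ i, i ∉ F → ∀ c : Fin 2, d (i, c) = 0 := by
      intro i hiF c
      by_contra hne
      exact hiF (Finset.mem_image.mpr ⟨(i, c), Finsupp.mem_support_iff.mpr hne, rfl⟩)
    refine ⟨i0, F.erase i0, Finset.notMem_erase _ _, ?_, ?_⟩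
    · have := congrArg Multiset.card hrep
      rw [Multiset.card_map, Multiset.card_replicate] at this; exact this
    · ext ⟨i, c⟩
      have happ : (fs i0 k j + ds (F.erase i0)) (i, c)
          = fs i0 k j (i, c) + ds (F.erase i0) (i, c) := rfl
      rcases (show c = 0 ∨ c = 1 by omega) with rfl | rfl
      · rw [happ, fs_apply0, ds_apply0]
        by_cases h1 : i = i0
        · subst h1; rw [if_pos rfl, hd0]; simp
        · rw [if_neg h1]
          by_cases h2 : i ∈ F.erase i0
          · rw [(hT1 i h2).1]
          · rw [hout i (fun hiF => h2 (Finset.mem_erase.mpr ⟨h1, hiF⟩)) 0]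
      · rw [happ, fs_apply1, ds_apply1]
        by_cases h1 : i = i0
        · subst h1; rw [if_pos rfl, if_neg (Finset.notMem_erase _ _), hd1]; simp
        · rw [if_neg h1]
          by_cases h2 : i ∈ F.erase i0
          · rw [(hT1 i h2).2, if_pos h2]
          · rw [hout i (fun hiF => h2 (Finset.mem_erase.mpr ⟨h1, hiF⟩)) 1, if_neg h2]
  · rintro ⟨i0, T, hi0T, rfl, rfl⟩
    exact shape_D i0 k j T hk hi0T

lemma shape_ds (T : Finset ℕ) :
    shape (ds T) = Multiset.replicate T.card ((0 : ℕ), (1 : ℕ)) := by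
  have hF : ∀ i, i ∈ T ↔ (ds T (i, 0) ≠ 0 ∨ ds T (i, 1) ≠ 0) := by
    intro i
    rw [ds_apply0, ds_apply1]
    by_cases h : i ∈ T <;> simp [h]
  rw [shape_spec (ds T) T hF]
  rw [show T.card = Multiset.card (T.val.map (fun i => (ds T (i, 0), ds T (i, 1)))) by simp]
  rw [Multiset.eq_replicate_card]
  intro x hx
  rw [Multiset.mem_map] at hx
  obtain ⟨i, hi, rfl⟩ := hx
  have hiT : i ∈ T := hi
  rw [ds_apply0, ds_apply1, if_pos hiT]

lemma shape_rep_iff (r : ℕ) (d : (ℕ × Fin 2) →₀ ℕ) :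
    shape d = Multiset.replicate r ((0 : ℕ), (1 : ℕ)) ↔
      ∃ T : Finset ℕ, T.card = r ∧ d = ds T := by
  constructor
  · intro h
    set F := d.support.image Prod.fst with hFdef
    have hT1 : ∀ i ∈ F, d (i, 0) = 0 ∧ d (i, 1) = 1 := by
      intro i hi
      have hx : (d (i, 0), d (i, 1)) ∈ F.val.map (fun i => (d (i, 0), d (i, 1))) :=
        Multiset.mem_map_of_mem _ hi
      rw [show F.val.map (fun i => (d (i, 0), d (i, 1))) = shape d from rfl, h] at hx
      have := Multiset.eq_of_mem_replicate hx
      exact ⟨congrArg Prod.fst this, congrArg Prod.snd this⟩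
    have hout : ∀ i, i ∉ F → ∀ c : Fin 2, d (i, c) = 0 := by
      intro i hiF c
      by_contra hne
      exact hiF (Finset.mem_image.mpr ⟨(i, c), Finsupp.mem_support_iff.mpr hne, rfl⟩)
    refine ⟨F, ?_, ?_⟩
    · have := congrArg Multiset.card h
      simp only [shape, Multiset.card_map, Multiset.card_replicate] at this; exact this
    · ext ⟨i, c⟩
      rcases (show c = 0 ∨ c = 1 by omega) with rfl | rfl
      · rw [ds_apply0]
        by_cases h2 : i ∈ F
        · exact (hT1 i h2).1
        · exact hout i h2 0
      · rw [ds_apply1]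
        by_cases h2 : i ∈ F
        · rw [if_pos h2]; exact (hT1 i h2).2
        · rw [if_neg h2]; exact hout i h2 1
  · rintro ⟨T, rfl, rfl⟩
    exact shape_ds T

lemma shape_single_iff (k j : ℕ) (hk : 0 < k) (d : (ℕ × Fin 2) →₀ ℕ) :
    shape d = ({((k : ℕ), (j : ℕ))} : Multiset (ℕ × ℕ)) ↔ ∃ i0, d = fs i0 k j := by
  have h0 : ({((k : ℕ), (j : ℕ))} : Multiset (ℕ × ℕ))
      = (k, j) ::ₘ Multiset.replicate 0 ((0 : ℕ), (1 : ℕ)) := by simp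
  rw [h0, shape_eq_iff k j 0 hk d]
  constructor
  · rintro ⟨i0, T, hT, hcard, rfl⟩
    rw [Finset.card_eq_zero] at hcard
    subst hcard
    exact ⟨i0, by simp [ds]⟩
  · rintro ⟨i0, rfl⟩
    exact ⟨i0, ∅, by simp, by simp, by simp [ds]⟩

lemma ne_AB (k j r : ℕ) (hk : 0 < k) :
    ((k, j) ::ₘ Multiset.replicate r ((0 : ℕ), (1 : ℕ)))
      ≠ ((k, j + 1) ::ₘ Multiset.replicate (r - 1) ((0 : ℕ), (1 : ℕ))) := by
  intro h
  have := congrArg (Multiset.count ((k : ℕ), (j : ℕ))) h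
  have h1 : ((k : ℕ), (j : ℕ)) ≠ ((0 : ℕ), (1 : ℕ)) := by
    simp [Prod.ext_iff]; omega
  have h2 : ((k : ℕ), (j : ℕ)) ≠ ((k : ℕ), (j + 1 : ℕ)) := by
    simp [Prod.ext_iff]
  simp [Multiset.count_cons, Multiset.count_replicate, if_neg h1, if_neg h2,
    if_neg (Ne.symm h1), if_neg (Ne.symm h2)] at this
  have h3 : ¬((0 : ℕ) = k ∧ (1 : ℕ) = j) := by omega
  rw [if_neg h3, if_neg h3] at this
  omega

lemma D_apply0 (i0 k j : ℕ) (T : Finset ℕ) (i : ℕ) :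
    (fs i0 k j + ds T) (i, 0) = if i = i0 then k else 0 := by
  simp [Finsupp.add_apply, fs_apply0, ds_apply0]

lemma eq_i0 {i0 i1 k j j' : ℕ} {T T1 : Finset ℕ} (hk : 0 < k)
    (h : fs i1 k j + ds T1 = fs i0 k j' + ds T) : i1 = i0 := by
  have := congrArg (fun f : (ℕ × Fin 2) →₀ ℕ => f (i1, 0)) h
  simp only [D_apply0] at this
  by_contra hne
  rw [if_neg hne] at this
  simp at this
  omega

lemma fs_succ (i0 k j : ℕ) :
    fs i0 k j + Finsupp.single ((i0 : ℕ), (1 : Fin 2)) 1 = fs i0 k (j + 1) := by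
  rw [fs, fs, add_assoc, ← Finsupp.single_add]

lemma ds_insert {i0 : ℕ} {T : Finset ℕ} (h : i0 ∉ T) :
    ds (insert i0 T) = Finsupp.single ((i0 : ℕ), (1 : Fin 2)) 1 + ds T :=
  Finset.sum_insert h

lemma shape_fs (i0 k j : ℕ) (hk : 0 < k) :
    shape (fs i0 k j) = ({((k : ℕ), (j : ℕ))} : Multiset (ℕ × ℕ)) :=
  (shape_single_iff k j hk _).mpr ⟨i0, rfl⟩

lemma mm_mul (k j r : ℕ) (hk : 0 < k) (hr : 0 < r) :
    mm {((k : ℕ), (j : ℕ))} * mm (Multiset.replicate r ((0 : ℕ), (1 : ℕ)))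
      = mm ((k, j) ::ₘ Multiset.replicate r ((0 : ℕ), (1 : ℕ)))
        + mm ((k, j + 1) ::ₘ Multiset.replicate (r - 1) ((0 : ℕ), (1 : ℕ))) := by
  apply MvPowerSeries.ext
  intro d
  rw [MvPowerSeries.coeff_mul, map_add, coeff_mm, coeff_mm]
  by_cases hA : shape d = (k, j) ::ₘ Multiset.replicate r ((0 : ℕ), (1 : ℕ))
  · have hB : shape d ≠ (k, j + 1) ::ₘ Multiset.replicate (r - 1) ((0 : ℕ), (1 : ℕ)) := by
      rw [hA]; exact ne_AB k j r hk
    rw [if_pos hA, if_neg hB, add_zero]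
    obtain ⟨i0, T, hi0T, hcard, rfl⟩ := (shape_eq_iff k j r hk _).mp hA
    rw [Finset.sum_eq_single_of_mem (fs i0 k j, ds T) (Finset.HasAntidiagonal.mem_antidiagonal.mpr rfl)]
    · rw [coeff_mm, coeff_mm, if_pos (shape_fs i0 k j hk), if_pos (hcard ▸ shape_ds T),
        mul_one]
    · rintro ⟨p1, p2⟩ hp hne
      rw [coeff_mm, coeff_mm]
      split_ifs with h1 h2
      · exfalso
        obtain ⟨i1, rfl⟩ := (shape_single_iff k j hk _).mp h1
        obtain ⟨T1, hT1card, rfl⟩ := (shape_rep_iff r _).mp h2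
        have hsum : fs i1 k j + ds T1 = fs i0 k j + ds T := Finset.HasAntidiagonal.mem_antidiagonal.mp hp
        have hEq : i1 = i0 := eq_i0 hk hsum
        rw [hEq] at hsum
        obtain rfl : T1 = T := ds_inj (add_left_cancel hsum)
        exact hne (by rw [hEq])
      · exact mul_zero _
      · exact zero_mul _
      · exact zero_mul _
  · by_cases hB : shape d = (k, j + 1) ::ₘ Multiset.replicate (r - 1) ((0 : ℕ), (1 : ℕ))
    · rw [if_pos hB, if_neg hA, zero_add]
      obtain ⟨i0, T, hi0T, hcard, rfl⟩ := (shape_eq_iff k (j + 1) (r - 1) hk _).mp hB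
      have hins : i0 ∉ T := hi0T
      have hsum0 : fs i0 k j + ds (insert i0 T) = fs i0 k (j + 1) + ds T := by
        rw [ds_insert hins, ← add_assoc, fs_succ]
      rw [Finset.sum_eq_single_of_mem (fs i0 k j, ds (insert i0 T))
          (Finset.HasAntidiagonal.mem_antidiagonal.mpr hsum0)]
      · have hcardins : (insert i0 T).card = r := by
          rw [Finset.card_insert_of_notMem hins, hcard]
          omega
        rw [coeff_mm, coeff_mm, if_pos (shape_fs i0 k j hk),
          if_pos (hcardins ▸ shape_ds (insert i0 T)), mul_one]
      · rintro ⟨p1, p2⟩ hp hne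
        rw [coeff_mm, coeff_mm]
        split_ifs with h1 h2
        · exfalso
          obtain ⟨i1, rfl⟩ := (shape_single_iff k j hk _).mp h1
          obtain ⟨T1, hT1card, rfl⟩ := (shape_rep_iff r _).mp h2
          have hsum : fs i1 k j + ds T1 = fs i0 k (j + 1) + ds T :=
            Finset.HasAntidiagonal.mem_antidiagonal.mp hp
          have hEq : i1 = i0 := eq_i0 hk hsum
          rw [hEq] at hsum
          obtain rfl : T1 = insert i0 T := ds_inj (add_left_cancel (hsum.trans hsum0.symm))
          exact hne (by rw [hEq])
        · exact mul_zero _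
        · exact zero_mul _
        · exact zero_mul _
    · rw [if_neg hA, if_neg hB, add_zero]
      apply Finset.sum_eq_zero
      rintro ⟨p1, p2⟩ hp
      rw [coeff_mm, coeff_mm]
      split_ifs with h1 h2
      · exfalso
        obtain ⟨i1, rfl⟩ := (shape_single_iff k j hk _).mp h1
        obtain ⟨T1, hT1card, rfl⟩ := (shape_rep_iff r _).mp h2
        have hsum : fs i1 k j + ds T1 = d := Finset.HasAntidiagonal.mem_antidiagonal.mp hp
        by_cases hin : i1 ∈ T1
        · apply hB
          have hT1 : ds T1 = Finsupp.single ((i1 : ℕ), (1 : Fin 2)) 1 + ds (T1.erase i1) := by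
            rw [ds]
            exact (Finset.add_sum_erase _ _ hin).symm
          have : d = fs i1 k (j + 1) + ds (T1.erase i1) := by
            rw [← hsum, hT1, ← add_assoc, fs_succ]
          rw [this, shape_D i1 k (j + 1) _ hk (Finset.notMem_erase _ _),
            Finset.card_erase_of_mem hin, hT1card]
        · apply hA
          rw [← hsum, shape_D i1 k j T1 hk hin, hT1card]
      · exact mul_zero _
      · exact zero_mul _
      · exact zero_mul _

lemma gen_mem (a b : ℕ) (Λ : Multiset (ℕ × ℕ)) (h1 : a ≠ b) (h2 : ((0 : ℕ), (0 : ℕ)) ∉ Λ) :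
    mm {(a, b)} * mm Λ ∈ Jbar :=
  Submodule.subset_span ⟨a, b, Λ, h1, h2, rfl⟩

lemma key (k : ℕ) (hk : 0 < k) :
    ∀ j, j ≤ k →
      mm ((k, j) ::ₘ Multiset.replicate (k - j) ((0 : ℕ), (1 : ℕ)))
        - ((-1 : ℂ) ^ j) • mm ((k, 0) ::ₘ Multiset.replicate k ((0 : ℕ), (1 : ℕ))) ∈ Jbar := by
  intro j
  induction j with
  | zero =>
    intro _
    simp only [pow_zero, one_smul, Nat.sub_zero, sub_self]
    exact Submodule.zero_mem _
  | succ j ih =>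
    intro hj
    have hjk : j < k := hj
    have hIH := ih (le_of_lt hjk)
    have hgen : mm {((k : ℕ), (j : ℕ))} * mm (Multiset.replicate (k - j) ((0 : ℕ), (1 : ℕ)))
        ∈ Jbar :=
      gen_mem k j _ (by omega)
        (by intro hm; rw [Multiset.mem_replicate] at hm; simp [Prod.ext_iff] at hm)
    have hmul := mm_mul k j (k - j) hk (by omega)
    have hsub : k - (j + 1) = (k - j) - 1 := by omega
    have heq : mm ((k, j + 1) ::ₘ Multiset.replicate (k - (j + 1)) ((0 : ℕ), (1 : ℕ)))
          - ((-1 : ℂ) ^ (j + 1)) • mm ((k, 0) ::ₘ Multiset.replicate k ((0 : ℕ), (1 : ℕ)))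
        = (mm {((k : ℕ), (j : ℕ))} * mm (Multiset.replicate (k - j) ((0 : ℕ), (1 : ℕ))))
          - (mm ((k, j) ::ₘ Multiset.replicate (k - j) ((0 : ℕ), (1 : ℕ)))
            - ((-1 : ℂ) ^ j) • mm ((k, 0) ::ₘ Multiset.replicate k ((0 : ℕ), (1 : ℕ)))) := by
      rw [hsub, hmul, pow_succ]
      module
    rw [heq]
    exact Submodule.sub_mem _ hgen hIH

/-- In `S̄ = S/(m_{(a,b)} : a ≠ b)`: `m̄_{(k,k)} = (−1)^k m̄_{(k,0)(0,1)^k}` for `k > 0`. -/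
theorem stmt13 (k : ℕ) (hk : 0 < k) :
    mm {((k : ℕ), (k : ℕ))} -
      ((-1 : ℂ) ^ k) • mm ((k, 0) ::ₘ Multiset.replicate k ((0 : ℕ), (1 : ℕ))) ∈ Jbar := by
  have h := key k hk k le_rfl
  have h0 : ((k, k) ::ₘ Multiset.replicate (k - k) ((0 : ℕ), (1 : ℕ)))
      = ({((k : ℕ), (k : ℕ))} : Multiset (ℕ × ℕ)) := by
    simp [Nat.sub_self]
  rwa [h0] at h
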